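/- Let G, H be strongly connected finite graphs and Φ: G → H a right-resolving homomorphism. Then all minimal images of Φ have the same cardinality, and for every state I' of G there exists a minimal image U containing I'. -/

import Mathlib

/-- A finite directed multigraph. -/
structure FinGraph where
  V : Type
  E : Type
  [fintV : Fintype V]
  [fintE : Fintype E]
  [decV : DecidableEq V]
  [decE : DecidableEq E]
  src : E → V
  tgt : E → V

attribute [instance] FinGraph.fintV FinGraph.fintE FinGraph.decV FinGraph.decE

/-- A graph homomorphism. -/
structure GHom (G H : FinGraph) where
  eMap : G.E → H.E
  vMap : G.V → H.V
  src_eq : ∀ e, H.src (eMap e) = vMap (G.src e)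
  tgt_eq : ∀ e, H.tgt (eMap e) = vMap (G.tgt e)

def GHom.comp {G K H : FinGraph} (Δ : GHom K H) (Ψ : GHom G K) : GHom G H where
  eMap := Δ.eMap ∘ Ψ.eMap
  vMap := Δ.vMap ∘ Ψ.vMap
  src_eq := fun e => by
    simp only [Function.comp_apply, Δ.src_eq, Ψ.src_eq]
  tgt_eq := fun e => by
    simp only [Function.comp_apply, Δ.tgt_eq, Ψ.tgt_eq]

/-- The restriction of a homomorphism to the outgoing edges of a state. -/
def outMap {G H : FinGraph} (Φ : GHom G H) (I : G.V) :
    {e : G.E // G.src e = I} → {f : H.E // H.src f = Φ.vMap I} :=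
  fun e => ⟨Φ.eMap e.1, (Φ.src_eq e.1).trans (congrArg Φ.vMap e.2)⟩

/-- A right-resolver: a surjective homomorphism restricting to a bijection
on the outgoing edges of each state. -/
def IsRR {G H : FinGraph} (Φ : GHom G H) : Prop :=
  Function.Surjective Φ.vMap ∧ ∀ I : G.V, Function.Bijective (outMap Φ I)

/-- `IsPathFrom H I u`: the edge list `u` is a path in `H` starting at `I`. -/
def IsPathFrom (H : FinGraph) : H.V → List H.E → Prop
  | _, [] => True
  | I, e :: u => H.src e = I ∧ IsPathFrom H (H.tgt e) u

/-- The terminal state of a path starting at `I`. -/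
def pathEnd (H : FinGraph) (I : H.V) (u : List H.E) : H.V :=
  u.foldl (fun _ e => H.tgt e) I

/-- One-step transition: `I · a` is the target of the unique edge at `I`
lifting `a` (when `Φ` is right-resolving and `a` starts at the image of `I`). -/
noncomputable def step {G H : FinGraph} (Φ : GHom G H) (I : G.V) (a : H.E) : G.V :=
  if h : ∃ e : G.E, G.src e = I ∧ Φ.eMap e = a then G.tgt h.choose else I

/-- Transition along a word: `I · u`. -/
noncomputable def transPath {G H : FinGraph} (Φ : GHom G H) (I : G.V) (u : List H.E) : G.V :=
  u.foldl (step Φ) I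

/-- The stability relation of a right-resolver. -/
def Stable {G H : FinGraph} (Φ : GHom G H) (I₁ I₂ : G.V) : Prop :=
  Φ.vMap I₁ = Φ.vMap I₂ ∧
  ∀ u : List H.E, IsPathFrom H (Φ.vMap I₁) u →
    ∃ v : List H.E, IsPathFrom H (pathEnd H (Φ.vMap I₁) u) v ∧
      transPath Φ I₁ (u ++ v) = transPath Φ I₂ (u ++ v)

/-- A right-resolver is synchronizing if each fiber of its state map is a
single stability class. -/
def Synchronizing {G H : FinGraph} (Φ : GHom G H) : Prop :=
  ∀ I₁ I₂ : G.V, Φ.vMap I₁ = Φ.vMap I₂ → Stable Φ I₁ I₂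

/-- The fiber of the state map over a state of the codomain. -/
def fiber {G H : FinGraph} (Φ : GHom G H) (I : H.V) : Set G.V := {J | Φ.vMap J = I}

/-- The image `U · u` of a set of states under transition along a word. -/
noncomputable def setTrans {G H : FinGraph} (Φ : GHom G H) (U : Set G.V)
    (u : List H.E) : Set G.V :=
  (fun J => transPath Φ J u) '' U

/-- A minimal image of a right-resolver. -/
def IsMinImage {G H : FinGraph} (Φ : GHom G H) (U : Set G.V) : Prop :=
  ∃ (I : H.V) (u : List H.E), IsPathFrom H I u ∧ U = setTrans Φ (fiber Φ I) u ∧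
    ∀ v : List H.E, IsPathFrom H (pathEnd H I u) v →
      (setTrans Φ U v).ncard = U.ncard

/-- Strong connectedness: a directed path between every ordered pair of states. -/
def StronglyConnected (G : FinGraph) : Prop :=
  ∀ I J : G.V, ∃ u : List G.E, IsPathFrom G I u ∧ pathEnd G I u = J


section AuxMinImage

variable {G H : FinGraph} (Φ : GHom G H)

lemma pathEnd_cons (I : H.V) (a : H.E) (u : List H.E) :
    pathEnd H I (a :: u) = pathEnd H (H.tgt a) u := rfl

lemma pathEnd_append (I : H.V) (u v : List H.E) :
    pathEnd H I (u ++ v) = pathEnd H (pathEnd H I u) v := by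
  simp [pathEnd, List.foldl_append]

lemma isPathFrom_append {I : H.V} {u v : List H.E} :
    IsPathFrom H I (u ++ v) ↔ IsPathFrom H I u ∧ IsPathFrom H (pathEnd H I u) v := by
  induction u generalizing I with
  | nil => simp [IsPathFrom, pathEnd]
  | cons a u ih => simp [IsPathFrom, ih, pathEnd_cons, and_assoc]

lemma transPath_append (I : G.V) (u v : List H.E) :
    transPath Φ I (u ++ v) = transPath Φ (transPath Φ I u) v := by
  simp [transPath, List.foldl_append]

lemma setTrans_append (A : Set G.V) (u v : List H.E) :
    setTrans Φ A (u ++ v) = setTrans Φ (setTrans Φ A u) v := by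
  simp [setTrans, Set.image_image, transPath_append]

lemma step_eq (hΦ : IsRR Φ) (e : G.E) :
    step Φ (G.src e) (Φ.eMap e) = G.tgt e := by
  have h : ∃ e' : G.E, G.src e' = G.src e ∧ Φ.eMap e' = Φ.eMap e := ⟨e, rfl, rfl⟩
  rw [step, dif_pos h]
  have h1 := h.choose_spec
  have h2 : outMap Φ (G.src e) ⟨h.choose, h1.1⟩ = outMap Φ (G.src e) ⟨e, rfl⟩ :=
    Subtype.ext h1.2
  have h3 := (hΦ.2 (G.src e)).1 h2
  exact congrArg G.tgt (congrArg Subtype.val h3)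

lemma step_lift (hΦ : IsRR Φ) (I : G.V) (a : H.E) (ha : H.src a = Φ.vMap I) :
    ∃ e : G.E, G.src e = I ∧ Φ.eMap e = a ∧ step Φ I a = G.tgt e := by
  obtain ⟨⟨e, he⟩, hfe⟩ := (hΦ.2 I).2 ⟨a, ha⟩
  have h1 : Φ.eMap e = a := congrArg Subtype.val hfe
  refine ⟨e, he, h1, ?_⟩
  subst he; subst h1
  exact step_eq Φ hΦ e

lemma vMap_transPath (hΦ : IsRR Φ) :
    ∀ (u : List H.E) (I : G.V), IsPathFrom H (Φ.vMap I) u →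
      Φ.vMap (transPath Φ I u) = pathEnd H (Φ.vMap I) u := by
  intro u
  induction u with
  | nil => intro I _; rfl
  | cons a u ih =>
    intro I hu
    obtain ⟨ha, hu'⟩ := hu
    obtain ⟨e, he, hea, hstep⟩ := step_lift Φ hΦ I a ha
    have hv : Φ.vMap (G.tgt e) = H.tgt a := by rw [← hea, ← Φ.tgt_eq]
    have h2 : transPath Φ I (a :: u) = transPath Φ (G.tgt e) u := by
      simp only [transPath, List.foldl_cons, hstep]
    rw [h2, pathEnd_cons]
    rw [← hv] at hu' ⊢
    exact ih (G.tgt e) hu'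

lemma lift_path (hΦ : IsRR Φ) :
    ∀ (p : List G.E) (J : G.V), IsPathFrom G J p →
      IsPathFrom H (Φ.vMap J) (p.map Φ.eMap) ∧
      transPath Φ J (p.map Φ.eMap) = pathEnd G J p := by
  intro p
  induction p with
  | nil => intro J _; exact ⟨trivial, rfl⟩
  | cons e p ih =>
    intro J hp
    obtain ⟨he, hp'⟩ := hp
    subst he
    obtain ⟨h1, h2⟩ := ih (G.tgt e) hp'
    have hs : step Φ (G.src e) (Φ.eMap e) = G.tgt e := step_eq Φ hΦ e
    constructor
    · exact ⟨Φ.src_eq e, by rw [Φ.tgt_eq]; exact h1⟩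
    · show transPath Φ (step Φ (G.src e) (Φ.eMap e)) (p.map Φ.eMap) = pathEnd G (G.tgt e) p
      rw [hs]; exact h2

lemma setTrans_fiber_subset (hΦ : IsRR Φ) {I : H.V} {u : List H.E}
    (hu : IsPathFrom H I u) :
    setTrans Φ (fiber Φ I) u ⊆ fiber Φ (pathEnd H I u) := by
  rintro _ ⟨J, hJ, rfl⟩
  have hJ' : Φ.vMap J = I := hJ
  have hu' : IsPathFrom H (Φ.vMap J) u := by rw [hJ']; exact hu
  show Φ.vMap (transPath Φ J u) = pathEnd H I u
  rw [vMap_transPath Φ hΦ u J hu', hJ']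

lemma minImage_le (hΦ : IsRR Φ) (hH : StronglyConnected H)
    {U₁ U₂ : Set G.V} (h₁ : IsMinImage Φ U₁) (h₂ : IsMinImage Φ U₂) :
    U₁.ncard ≤ U₂.ncard := by
  obtain ⟨I₁, u₁, hu₁, rfl, hmin₁⟩ := h₁
  obtain ⟨I₂, u₂, hu₂, rfl, _⟩ := h₂
  obtain ⟨w, hw, hwend⟩ := hH (pathEnd H I₁ u₁) I₂
  have hpath : IsPathFrom H (pathEnd H I₁ u₁) (w ++ u₂) :=
    isPathFrom_append.mpr ⟨hw, by rw [hwend]; exact hu₂⟩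
  have hcard := hmin₁ (w ++ u₂) hpath
  have hsub : setTrans Φ (setTrans Φ (fiber Φ I₁) u₁) (w ++ u₂)
      ⊆ setTrans Φ (fiber Φ I₂) u₂ := by
    have e1 : setTrans Φ (setTrans Φ (fiber Φ I₁) u₁) (w ++ u₂)
        = setTrans Φ (setTrans Φ (fiber Φ I₁) (u₁ ++ w)) u₂ := by
      simp [setTrans_append]
    rw [e1]
    have hsub2 : setTrans Φ (fiber Φ I₁) (u₁ ++ w) ⊆ fiber Φ I₂ := by
      have h3 := setTrans_fiber_subset Φ hΦ (u := u₁ ++ w)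
        (isPathFrom_append.mpr ⟨hu₁, hw⟩)
      rwa [pathEnd_append, hwend] at h3
    exact Set.image_mono hsub2
  calc (setTrans Φ (fiber Φ I₁) u₁).ncard
      = (setTrans Φ (setTrans Φ (fiber Φ I₁) u₁) (w ++ u₂)).ncard := hcard.symm
    _ ≤ (setTrans Φ (fiber Φ I₂) u₂).ncard := Set.ncard_le_ncard hsub (Set.toFinite _)

lemma exists_minImage_mem (hΦ : IsRR Φ) (hG : StronglyConnected G) (I' : G.V) :
    ∃ U : Set G.V, IsMinImage Φ U ∧ I' ∈ U := by
  set I₀ := Φ.vMap I' with hI₀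
  set S : Set ℕ :=
    {n | ∃ u, IsPathFrom H I₀ u ∧ (setTrans Φ (fiber Φ I₀) u).ncard = n} with hSdef
  have hS : S.Nonempty := ⟨(setTrans Φ (fiber Φ I₀) []).ncard, [], trivial, rfl⟩
  obtain ⟨u₀, hu₀, hm⟩ := Nat.sInf_mem hS
  set m := sInf S with hmdef
  have hmin : ∀ u, IsPathFrom H I₀ u → m ≤ (setTrans Φ (fiber Φ I₀) u).ncard :=
    fun u hu => Nat.sInf_le ⟨u, hu, rfl⟩
  have hI'fib : I' ∈ fiber Φ I₀ := rfl
  set J := transPath Φ I' u₀ with hJdef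
  have hJmem : J ∈ setTrans Φ (fiber Φ I₀) u₀ := ⟨I', hI'fib, rfl⟩
  have hJv : Φ.vMap J = pathEnd H I₀ u₀ := vMap_transPath Φ hΦ u₀ I' hu₀
  obtain ⟨p, hp, hpend⟩ := hG J I'
  obtain ⟨hw, htp⟩ := lift_path Φ hΦ p J hp
  set w := p.map Φ.eMap with hwdef
  have hw' : IsPathFrom H (pathEnd H I₀ u₀) w := by rw [← hJv]; exact hw
  have hpathuw : IsPathFrom H I₀ (u₀ ++ w) := isPathFrom_append.mpr ⟨hu₀, hw'⟩
  have hUle : (setTrans Φ (fiber Φ I₀) (u₀ ++ w)).ncard ≤ m := by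
    rw [setTrans_append, ← hm]
    exact Set.ncard_image_le (Set.toFinite _)
  have hUeq : (setTrans Φ (fiber Φ I₀) (u₀ ++ w)).ncard = m :=
    le_antisymm hUle (hmin _ hpathuw)
  refine ⟨setTrans Φ (fiber Φ I₀) (u₀ ++ w), ⟨I₀, u₀ ++ w, hpathuw, rfl, ?_⟩, ?_⟩
  · intro v hv
    have hpathv : IsPathFrom H I₀ ((u₀ ++ w) ++ v) :=
      isPathFrom_append.mpr ⟨hpathuw, hv⟩
    have h1 : (setTrans Φ (setTrans Φ (fiber Φ I₀) (u₀ ++ w)) v).ncard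
        = (setTrans Φ (fiber Φ I₀) ((u₀ ++ w) ++ v)).ncard := by
      simp [setTrans_append]
    have h2 : (setTrans Φ (setTrans Φ (fiber Φ I₀) (u₀ ++ w)) v).ncard
        ≤ (setTrans Φ (fiber Φ I₀) (u₀ ++ w)).ncard :=
      Set.ncard_image_le (Set.toFinite _)
    have h3 := hmin _ hpathv
    omega
  · rw [setTrans_append]
    exact ⟨J, hJmem, htp.trans hpend⟩

end AuxMinImage

/-- in the strongly connected case, all minimal images have the
same cardinality and every state lies in some minimal image. -/
theorem minimal_images_same_card_and_cover {G H : FinGraph} (Φ : GHom G H)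
    (hΦ : IsRR Φ) (hG : StronglyConnected G) (hH : StronglyConnected H) :
    (∀ U₁ U₂ : Set G.V, IsMinImage Φ U₁ → IsMinImage Φ U₂ → U₁.ncard = U₂.ncard) ∧
    (∀ I' : G.V, ∃ U : Set G.V, IsMinImage Φ U ∧ I' ∈ U) := by
  constructor
  · intro U₁ U₂ h₁ h₂
    exact le_antisymm (minImage_le Φ hΦ hH h₁ h₂) (minImage_le Φ hΦ hH h₂ h₁)
  · exact exists_minImage_mem Φ hΦ hG
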